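/- arXiv:2310.19140 — 2 statements merged into one kernel-verified Lean document; each statement's English description precedes it below -/
import Mathlib

section
/- Let $r > 0$ and $\Omega_t = \{z \in \mathbb{C}^4 : |z_1| + |z'| < r - t\}$ for $0 \le t < r$. Let $a$ be holomorphic on $\Omega_0$ with $\sup_{\Omega_s} |a| \le M m^m s^{-m}$ for all $s \in (0,r)$, where $m \ge 1$ is an integer and $M \ge 0$ (convention $0^0=1$ if needed). Let $Q(z, D_z)$ be a differential operator of order at most $2$ with holomorphic coefficients bounded on a neighbourhood of $\overline{\Omega_0}$. Then there exists $C > 0$ (depending only on $Q$) such that for all $t \in (0, r)$, $\sup_{\Omega_t} |Q(z,D_z) a| \le C M (m+2)^{m+2} t^{-(m+2)}$. -/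
open Metric Set MeasureTheory

set_option maxHeartbeats 1000000
set_option synthInstance.maxHeartbeats 1000000

noncomputable section
namespace Stmt5Aux

instance : MeasurableSpace (EuclideanSpace ℂ (Fin 3)) := borel _
instance : BorelSpace (EuclideanSpace ℂ (Fin 3)) := ⟨rfl⟩

abbrev EE := ℂ × EuclideanSpace ℂ (Fin 3)

def nn (z : EE) : ℝ := ‖z.1‖ + ‖z.2‖

lemma nn_nonneg (z : EE) : 0 ≤ nn z := add_nonneg (norm_nonneg _) (norm_nonneg _)

lemma nn_zero : nn 0 = 0 := by simp [nn]

lemma nn_add_le (x y : EE) : nn (x + y) ≤ nn x + nn y := by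
  have h1 := norm_add_le x.1 y.1
  have h2 : ‖x.2 + y.2‖ ≤ ‖x.2‖ + ‖y.2‖ := norm_add_le _ _
  simp only [nn, Prod.fst_add, Prod.snd_add]
  linarith

lemma nn_smul (c : ℂ) (v : EE) : nn (c • v) = ‖c‖ * nn v := by
  simp only [nn, Prod.smul_fst, Prod.smul_snd, smul_eq_mul, map_mul, norm_smul,
    norm_mul]
  ring

lemma nn_le_two_norm (v : EE) : nn v ≤ 2 * ‖v‖ := by
  have h1 : ‖v.1‖ ≤ ‖v‖ := by exact norm_fst_le v
  have h2 : ‖v.2‖ ≤ ‖v‖ := norm_snd_le v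
  simp only [nn]; linarith

lemma nn_eq_zero {v : EE} (h : nn v = 0) : v = 0 := by
  have h' : ‖v.1‖ + ‖v.2‖ = 0 := h
  have h1 : ‖v.1‖ = 0 := by
    linarith [norm_nonneg v.1, norm_nonneg v.2]
  have h2 : ‖v.2‖ = 0 := by linarith [norm_nonneg v.1, norm_nonneg v.2]
  have : v.1 = 0 := norm_eq_zero.mp h1
  have h2' : v.2 = 0 := norm_eq_zero.mp h2
  exact Prod.ext this h2'

lemma continuous_nn : Continuous nn :=
  (continuous_norm.comp continuous_fst).add (continuous_norm.comp continuous_snd)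

lemma isOpen_nnlt (c : ℝ) : IsOpen {x : EE | nn x < c} :=
  isOpen_lt continuous_nn continuous_const

lemma keyA {ρ ρ' B : ℝ} (h : ρ' < ρ) (hB : 0 ≤ B) (a : EE → ℂ)
    (ha : DifferentiableOn ℂ a {x : EE | nn x < ρ})
    (hb : ∀ x : EE, nn x < ρ → ‖a x‖ ≤ B)
    (v z : EE) (hz : nn z < ρ') :
    ‖fderiv ℂ a z v‖ ≤ 3 * B * nn v / (ρ - ρ') := by
  have hzρ : nn z < ρ := hz.trans h
  have hop := isOpen_nnlt ρ
  have hda : DifferentiableAt ℂ a z := ha.differentiableAt (hop.mem_nhds hzρ)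
  rcases eq_or_lt_of_le (nn_nonneg v) with h0 | hv
  · have hv0 : v = 0 := nn_eq_zero h0.symm
    rw [hv0]
    simp [nn_zero]
  rcases hB.eq_or_lt with hB0 | hBpos
  · have hev : a =ᶠ[nhds z] fun _ => (0:ℂ) := by
      filter_upwards [hop.mem_nhds hzρ] with w hw
      have h1 := hb w hw
      rw [← hB0] at h1
      exact norm_eq_zero.mp (le_antisymm h1 (norm_nonneg _))
    rw [hev.fderiv_eq, fderiv_fun_const]
    simp [← hB0]
  · set R := (ρ - ρ') / nn v with hR
    have hRpos : 0 < R := div_pos (by linarith) hv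
    have hmem : ∀ w : ℂ, w ∈ ball (0:ℂ) R → nn (z + w • v) < ρ := by
      intro w hw
      have h1 := nn_add_le z (w • v)
      rw [nn_smul] at h1
      have h2 : ‖w‖ < R := by simpa [Complex.dist_eq] using hw
      have h3 : ‖w‖ * nn v < R * nn v := mul_lt_mul_of_pos_right h2 hv
      have h4 : R * nn v = ρ - ρ' := div_mul_cancel₀ _ (ne_of_gt hv)
      linarith
    have hφ : ∀ w₀ : ℂ, HasDerivAt (fun w : ℂ => z + w • v) v w₀ := by
      intro w₀
      simpa using ((hasDerivAt_id w₀).smul_const v).const_add z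
    have hgd : DifferentiableOn ℂ (fun w : ℂ => a (z + w • v)) (ball 0 R) := fun w hw =>
      ((ha.differentiableAt (hop.mem_nhds (hmem w hw))).comp w
        (hφ w).differentiableAt).differentiableWithinAt
    have hg0 : z + (0:ℂ) • v = z := by simp
    have hmaps : MapsTo (fun w : ℂ => a (z + w • v)) (ball 0 R)
        (ball ((fun w : ℂ => a (z + w • v)) 0) (3 * B)) := by
      intro w hw
      simp only [mem_ball, Complex.dist_eq, hg0]
      have t1 : ‖a (z + w • v) - a z‖ ≤
          ‖a (z + w • v)‖ + ‖a z‖ := by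
        simpa using norm_sub_le (a (z + w • v)) (a z)
      have t2 := hb _ (hmem w hw)
      have t3 := hb z hzρ
      linarith
    have hSch := Complex.norm_deriv_le_div_of_mapsTo_ball hgd (hmaps.mono_right ball_subset_closedBall) hRpos
    have hder : HasDerivAt (fun w : ℂ => a (z + w • v)) (fderiv ℂ a (z + (0:ℂ) • v) v) 0 := by
      have hda' : DifferentiableAt ℂ a (z + (0:ℂ) • v) := by rwa [hg0]
      exact hda'.hasFDerivAt.comp_hasDerivAt 0 (hφ 0)
    rw [hg0] at hder
    rw [hder.deriv] at hSch
    have hcalc : 3 * B / R = 3 * B * nn v / (ρ - ρ') := by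
      rw [hR]
      field_simp
    rwa [hcalc] at hSch


lemma lemD {ρ σ B : ℝ} (hσρ : σ < ρ) (hσ : 0 ≤ σ)
    (a : EE → ℂ) (ha : DifferentiableOn ℂ a {x : EE | nn x < ρ})
    (hb : ∀ x : EE, nn x < ρ → ‖a x‖ ≤ B) (d : EE) :
    DifferentiableOn ℂ (fun x => fderiv ℂ a x d) {x : EE | nn x < σ} := by
  have hρ : 0 < ρ := lt_of_le_of_lt hσ hσρ
  have hB0 : 0 ≤ B :=
    le_trans (norm_nonneg _) (hb 0 (by simpa [nn_zero] using hρ))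
  rcases eq_or_lt_of_le (nn_nonneg d) with hd0 | hd
  · have hd' : d = 0 := nn_eq_zero hd0.symm
    have : (fun x : EE => fderiv ℂ a x d) = fun _ => (0 : ℂ) := by
      funext x; rw [hd']; exact (fderiv ℂ a x).map_zero
    rw [this]
    exact differentiableOn_const _
  set δ := ρ - σ with hδdef
  have hδ : 0 < δ := by simp only [hδdef]; linarith
  set ro := δ / (2 * nn d) with hrodef
  have hro : 0 < ro := by positivity
  have hrond : ro * nn d = δ / 2 := by
    rw [hrodef]; field_simp
  -- operator norm bound for fderiv a on the region {nn < ρ - δ/4}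
  have hop : ∀ y : EE, nn y < ρ - δ / 4 → ‖fderiv ℂ a y‖ ≤ 24 * B / δ := by
    intro y hy
    apply ContinuousLinearMap.opNorm_le_bound _ (by positivity)
    intro v
    have h1 := keyA (show ρ - δ / 4 < ρ by linarith) hB0 a ha hb v y hy
    have h2 : ρ - (ρ - δ / 4) = δ / 4 := by ring
    rw [h2] at h1
    have h3 : 3 * B * nn v / (δ / 4) ≤ 3 * B * (2 * ‖v‖) / (δ / 4) := by
      gcongr
      exact nn_le_two_norm v
    have h4 : 3 * B * (2 * ‖v‖) / (δ / 4) = 24 * B / δ * ‖v‖ := by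
      field_simp; ring
    calc ‖fderiv ℂ a y v‖ = ‖fderiv ℂ a y v‖ := rfl
      _ ≤ 3 * B * nn v / (δ / 4) := h1
      _ ≤ 3 * B * (2 * ‖v‖) / (δ / 4) := h3
      _ = 24 * B / δ * ‖v‖ := h4
  -- membership facts
  have hmem2 : ∀ x : EE, nn x < σ + δ / 4 → ∀ w : ℂ, ‖w‖ ≤ ro →
      nn (x + w • d) < ρ - δ / 4 := by
    intro x hx w hw
    have h1 := nn_add_le x (w • d)
    rw [nn_smul] at h1
    have h2 : ‖w‖ * nn d ≤ ro * nn d :=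
      mul_le_mul_of_nonneg_right hw (nn_nonneg d)
    rw [hrond] at h2
    have : σ + δ / 4 + δ / 2 = ρ - δ / 4 := by rw [hδdef]; ring
    linarith
  -- Cauchy representation of the directional derivative
  have hrep : ∀ x : EE, nn x < σ + δ / 4 → fderiv ℂ a x d =
      (2 * ↑Real.pi * Complex.I)⁻¹ • ∮ z in C(0, ro), ((z - 0) ^ 2)⁻¹ • a (x + z • d) := by
    intro x hx
    set R := (ρ - nn x) / nn d with hRdef
    have hxρ : nn x < ρ - δ / 2 := by linarith
    have hR : 0 < R := by
      rw [hRdef]; apply div_pos (by linarith) hd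
    have hroR : ro < R := by
      rw [hRdef, hrodef, div_lt_div_iff₀ (by positivity) hd]
      nlinarith
    have hfd : DifferentiableOn ℂ (fun u : ℂ => a (x + u • d)) (ball 0 R) := by
      intro w hw
      have hw' : ‖w‖ < R := by simpa [Complex.dist_eq] using hw
      have hmem : nn (x + w • d) < ρ := by
        have h1 := nn_add_le x (w • d)
        rw [nn_smul] at h1
        have h2 : ‖w‖ * nn d < R * nn d := mul_lt_mul_of_pos_right hw' hd
        have h3 : R * nn d = ρ - nn x := by rw [hRdef]; field_simp
        linarith
      have hφ : HasDerivAt (fun w : ℂ => x + w • d) d w := by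
        simpa using ((hasDerivAt_id w).smul_const d).const_add x
      exact ((ha.differentiableAt ((isOpen_nnlt ρ).mem_nhds hmem)).comp w
        hφ.differentiableAt).differentiableWithinAt
    have hform := Complex.two_pi_I_inv_smul_circleIntegral_sub_sq_inv_smul_of_differentiable
      isOpen_ball (closedBall_subset_ball hroR) hfd (mem_ball_self hro)
    have hx0 : x + (0 : ℂ) • d = x := by simp
    have hmemx : nn (x + (0:ℂ) • d) < ρ := by rw [hx0]; linarith
    have hder : HasDerivAt (fun u : ℂ => a (x + u • d)) (fderiv ℂ a (x + (0:ℂ) • d) d) 0 := by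
      have hda' : DifferentiableAt ℂ a (x + (0:ℂ) • d) :=
        ha.differentiableAt ((isOpen_nnlt ρ).mem_nhds hmemx)
      have hφ : HasDerivAt (fun w : ℂ => x + w • d) d 0 := by
        simpa using ((hasDerivAt_id (0:ℂ)).smul_const d).const_add x
      exact hda'.hasFDerivAt.comp_hasDerivAt 0 hφ
    rw [hx0] at hder
    rw [hder.deriv] at hform
    exact hform.symm
  -- now prove differentiability
  intro x₀ hx₀
  simp only [mem_setOf_eq] at hx₀
  apply DifferentiableAt.differentiableWithinAt
  set μ : Measure ℝ := volume.restrict (Ioc (0:ℝ) (2 * Real.pi)) with hμdef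
  set G : EE → ℝ → ℂ := fun x θ =>
    deriv (circleMap 0 ro) θ •
      (((circleMap 0 ro θ - 0) ^ 2)⁻¹ • a (x + circleMap 0 ro θ • d)) with hGdef
  set G' : EE → ℝ → EE →L[ℂ] ℂ := fun x θ =>
    deriv (circleMap 0 ro) θ •
      (((circleMap 0 ro θ - 0) ^ 2)⁻¹ •
        ((fderiv ℂ a (x + circleMap 0 ro θ • d)).comp (ContinuousLinearMap.id ℂ EE))) with hG'def
  have hcm_abs : ∀ θ : ℝ, ‖circleMap 0 ro θ‖ = ro := by
    intro θ; rw [norm_circleMap_zero, abs_of_pos hro]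
  have hcm_ne : ∀ θ : ℝ, circleMap 0 ro θ ≠ 0 := by
    intro θ h
    have := hcm_abs θ
    rw [h] at this
    simp at this
    linarith
  have hmx : ∀ x : EE, Continuous fun θ : ℝ => x + circleMap 0 ro θ • d :=
    fun x => continuous_const.add ((continuous_circleMap 0 ro).smul continuous_const)
  have hball : ∀ x ∈ ball x₀ (δ / 8), nn x < σ + δ / 4 := by
    intro x hx
    have h1 : ‖x - x₀‖ < δ / 8 := by simpa [dist_eq_norm] using hx
    have h2 : nn (x - x₀) ≤ 2 * ‖x - x₀‖ := nn_le_two_norm _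
    have h3 : nn x ≤ nn x₀ + nn (x - x₀) := by
      have := nn_add_le x₀ (x - x₀)
      simpa using this
    linarith
  have hGcont : ∀ x : EE, nn x < σ + δ / 4 → Continuous (G x) := by
    intro x hx
    have h1 : Continuous fun θ : ℝ => a (x + circleMap 0 ro θ • d) := by
      apply ha.continuousOn.comp_continuous (hmx x)
      intro θ
      have := hmem2 x hx (circleMap 0 ro θ) (le_of_eq (hcm_abs θ))
      simp only [mem_setOf_eq]
      linarith
    have h2 : Continuous fun θ : ℝ => deriv (circleMap 0 ro) θ := by
      simp only [deriv_circleMap]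
      exact (continuous_circleMap 0 ro).mul continuous_const
    have h3 : Continuous fun θ : ℝ => ((circleMap 0 ro θ - 0) ^ 2)⁻¹ := by
      apply Continuous.inv₀ (((continuous_circleMap 0 ro).sub continuous_const).pow 2)
      intro θ
      exact pow_ne_zero _ (by simpa using hcm_ne θ)
    exact h2.smul (h3.smul h1)
  have hx₀ball : x₀ ∈ ball x₀ (δ / 8) := mem_ball_self (by positivity)
  have hmain : HasFDerivAt (fun x => ∫ θ, G x θ ∂μ) (∫ θ, G' x₀ θ ∂μ) x₀ := by
    apply hasFDerivAt_integral_of_dominated_of_fderiv_le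
      (bound := fun _ => ro * ((ro ^ 2)⁻¹ * (24 * B / δ))) (s := ball x₀ (δ / 8)) (ball_mem_nhds x₀ (by positivity))
    · filter_upwards [ball_mem_nhds x₀ (by positivity : (0:ℝ) < δ / 8)] with x hx
      exact (hGcont x (hball x hx)).aestronglyMeasurable
    · exact (hGcont x₀ (hball x₀ hx₀ball)).integrableOn_Ioc
    · -- measurability of G' x₀
      simp only [hG'def, ContinuousLinearMap.comp_id]
      have h2 : Continuous fun θ : ℝ => deriv (circleMap 0 ro) θ := by
        simp only [deriv_circleMap]
        exact (continuous_circleMap 0 ro).mul continuous_const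
      have h3 : Continuous fun θ : ℝ => ((circleMap 0 ro θ - 0) ^ 2)⁻¹ := by
        apply Continuous.inv₀ (((continuous_circleMap 0 ro).sub continuous_const).pow 2)
        intro θ
        exact pow_ne_zero _ (by simpa using hcm_ne θ)
      have h4 : Measurable fun θ : ℝ => fderiv ℂ a (x₀ + circleMap 0 ro θ • d) :=
        (measurable_fderiv ℂ a).comp (hmx x₀).measurable
      exact (h2.aestronglyMeasurable.smul
        (h3.aestronglyMeasurable.smul h4.aestronglyMeasurable))
    · -- bound
      refine Filter.Eventually.of_forall fun θ => fun x hx => ?_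
      have hy : nn (x + circleMap 0 ro θ • d) < ρ - δ / 4 :=
        hmem2 x (hball x hx) (circleMap 0 ro θ) (le_of_eq (hcm_abs θ))
      have hnorm1 : ‖deriv (circleMap 0 ro) θ‖ = ro := by
        rw [deriv_circleMap, norm_mul]
        simp [hcm_abs θ]
      have hnorm2 : ‖((circleMap 0 ro θ - 0) ^ 2)⁻¹‖ = (ro ^ 2)⁻¹ := by
        rw [norm_inv, norm_pow]
        simp [hcm_abs θ]
      simp only [hG'def, ContinuousLinearMap.comp_id]
      calc ‖deriv (circleMap 0 ro) θ • (((circleMap 0 ro θ - 0) ^ 2)⁻¹ •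
              fderiv ℂ a (x + circleMap 0 ro θ • d))‖
          ≤ ‖deriv (circleMap 0 ro) θ‖ * ‖((circleMap 0 ro θ - 0) ^ 2)⁻¹ •
              fderiv ℂ a (x + circleMap 0 ro θ • d)‖ := norm_smul_le _ _
        _ ≤ ‖deriv (circleMap 0 ro) θ‖ * (‖((circleMap 0 ro θ - 0) ^ 2)⁻¹‖ *
              ‖fderiv ℂ a (x + circleMap 0 ro θ • d)‖) :=
            mul_le_mul_of_nonneg_left (norm_smul_le _ _) (norm_nonneg _)
        _ = ro * ((ro ^ 2)⁻¹ * ‖fderiv ℂ a (x + circleMap 0 ro θ • d)‖) := by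
            rw [hnorm1, hnorm2]
        _ ≤ ro * ((ro ^ 2)⁻¹ * (24 * B / δ)) :=
            mul_le_mul_of_nonneg_left
              (mul_le_mul_of_nonneg_left (hop _ hy) (by positivity)) (by positivity)
    · exact integrableOn_const measure_Ioc_lt_top.ne
    · -- differentiability in the parameter
      refine Filter.Eventually.of_forall fun θ => fun x hx => ?_
      have hy : nn (x + circleMap 0 ro θ • d) < ρ - δ / 4 :=
        hmem2 x (hball x hx) (circleMap 0 ro θ) (le_of_eq (hcm_abs θ))
      have hA : HasFDerivAt a (fderiv ℂ a (x + circleMap 0 ro θ • d))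
          (x + circleMap 0 ro θ • d) :=
        (ha.differentiableAt ((isOpen_nnlt ρ).mem_nhds (by simp only [mem_setOf_eq]; linarith))).hasFDerivAt
      have hT : HasFDerivAt (fun x : EE => x + circleMap 0 ro θ • d)
          (ContinuousLinearMap.id ℂ EE) x := (hasFDerivAt_id x).add_const _
      have h5 := ((hA.comp x hT).const_smul
        (((circleMap 0 ro θ - 0) ^ 2)⁻¹ : ℂ)).const_smul (deriv (circleMap 0 ro) θ)
      exact h5
  have hΨ : DifferentiableAt ℂ (fun x => ∫ θ, G x θ ∂μ) x₀ := hmain.differentiableAt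
  have hΦ : DifferentiableAt ℂ
      (fun x : EE => (2 * ↑Real.pi * Complex.I)⁻¹ •
        ∮ z in C(0, ro), ((z - 0) ^ 2)⁻¹ • a (x + z • d)) x₀ := by
    have hΦeq : (fun x : EE => (2 * ↑Real.pi * Complex.I)⁻¹ •
        ∮ z in C(0, ro), ((z - 0) ^ 2)⁻¹ • a (x + z • d)) =
        fun x => (2 * ↑Real.pi * Complex.I)⁻¹ • ∫ θ, G x θ ∂μ := by
      funext x
      congr 1
      have h1 : (∮ z in C(0, ro), ((z - 0) ^ 2)⁻¹ • a (x + z • d)) =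
          ∫ θ in (0:ℝ)..(2 * Real.pi), G x θ := rfl
      rw [h1, intervalIntegral.integral_of_le (by positivity : (0:ℝ) ≤ 2 * Real.pi)]
    rw [hΦeq]
    exact hΨ.fun_const_smul _
  have hev : (fun x : EE => fderiv ℂ a x d) =ᶠ[nhds x₀]
      (fun x : EE => (2 * ↑Real.pi * Complex.I)⁻¹ •
        ∮ z in C(0, ro), ((z - 0) ^ 2)⁻¹ • a (x + z • d)) := by
    filter_upwards [(isOpen_nnlt (σ + δ / 4)).mem_nhds
      (by simp only [mem_setOf_eq]; linarith)] with x hx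
    exact hrep x hx
  exact hΦ.congr_of_eventuallyEq hev


end Stmt5Aux

open Stmt5Aux

/-- A second-order differential operator `Q` with holomorphic coefficients bounded on a
neighbourhood of `closure Ω₀` maps functions with blow-up rate `M m^m s^{-m}` on the
scale `Ω_s` to functions with rate `C M (m+2)^{m+2} t^{-(m+2)}`, with `C` depending
only on `Q` (and `r`). Here
`Q a z = c₀ z • a z + ∑ i, c₁ i z • (fderiv a z)(e i) + ∑ j, c₂ j z • (fderiv² a z)(d j)(d' j)`. -/
theorem stmt_5 (r : ℝ) (hr : 0 < r)
    (Ω : ℝ → Set (ℂ × EuclideanSpace ℂ (Fin 3)))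
    (hΩ : ∀ t, Ω t = {z | ‖z.1‖ + ‖z.2‖ < r - t})
    -- the operator Q: coefficients and (constant) directions
    (n : ℕ) (c₀ : ℂ × EuclideanSpace ℂ (Fin 3) → ℂ)
    (c₁ c₂ : Fin n → ℂ × EuclideanSpace ℂ (Fin 3) → ℂ)
    (e d d' : Fin n → ℂ × EuclideanSpace ℂ (Fin 3))
    -- coefficients holomorphic and bounded on a neighbourhood of `closure Ω₀`
    (U : Set (ℂ × EuclideanSpace ℂ (Fin 3))) (hU : IsOpen U) (hUΩ : closure (Ω 0) ⊆ U)
    (hc₀ : DifferentiableOn ℂ c₀ U) (hc₁ : ∀ i, DifferentiableOn ℂ (c₁ i) U)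
    (hc₂ : ∀ i, DifferentiableOn ℂ (c₂ i) U)
    (K : ℝ) (hK : ∀ z ∈ U, ‖c₀ z‖ ≤ K ∧
      ∀ i, ‖c₁ i z‖ ≤ K ∧ ‖c₂ i z‖ ≤ K) :
    ∃ C > 0, ∀ (M : ℝ), 0 ≤ M → ∀ (m : ℕ), 1 ≤ m →
      ∀ a : ℂ × EuclideanSpace ℂ (Fin 3) → ℂ, DifferentiableOn ℂ a (Ω 0) →
      (∀ s ∈ Set.Ioo (0:ℝ) r, ∀ z ∈ Ω s, ‖a z‖ ≤ M * (m : ℝ) ^ m / s ^ m) →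
      ∀ t ∈ Set.Ioo (0:ℝ) r, ∀ z ∈ Ω t,
        ‖c₀ z * a z
            + ∑ i, c₁ i z * fderiv ℂ a z (e i)
            + ∑ j, c₂ j z * fderiv ℂ (fun w => fderiv ℂ a w (d j)) z (d' j)‖
          ≤ C * M * ((m : ℝ) + 2) ^ (m + 2) / t ^ (m + 2) := by
  have h0Ω : (0 : EE) ∈ Ω 0 := by
    rw [hΩ 0]
    simp only [Set.mem_setOf_eq, Prod.fst_zero, Prod.snd_zero, map_zero, norm_zero]
    simpa using hr
  have h0U : (0 : EE) ∈ U := hUΩ (subset_closure h0Ω)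
  have hK0 : 0 ≤ K := le_trans (norm_nonneg _) (hK 0 h0U).1
  set S1 : ℝ := ∑ i, 3 * K * nn (e i) with hS1def
  set S2 : ℝ := ∑ j, 9 * K * nn (d j) * nn (d' j) with hS2def
  have hS1 : 0 ≤ S1 := Finset.sum_nonneg fun i _ => by
    have := nn_nonneg (e i); positivity
  have hS2 : 0 ≤ S2 := Finset.sum_nonneg fun j _ => by
    have := nn_nonneg (d j); have := nn_nonneg (d' j); positivity
  refine ⟨K * (r/3)^2 + S1 * (r/3) + S2 + 1, by positivity, ?_⟩
  intro M hM m hm a ha hB t ht z hz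
  obtain ⟨ht0, htr⟩ := ht
  have hm1 : (1:ℝ) ≤ (m:ℝ) := by exact_mod_cast hm
  have hmpos : (0:ℝ) < (m:ℝ) := by linarith
  have hm2 : (0:ℝ) < (m:ℝ) + 2 := by linarith
  set g := t / ((m:ℝ) + 2) with hgdef
  have hg : 0 < g := by rw [hgdef]; positivity
  have hg3 : g ≤ t / 3 := by
    rw [hgdef, div_le_div_iff₀ hm2 (by norm_num)]
    nlinarith
  have h2g : 2 * g < t := by linarith
  rw [hΩ t] at hz
  have hz' : nn z < r - t := hz
  rw [hΩ 0] at ha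
  have ha0 : DifferentiableOn ℂ a {x : EE | nn x < r - 0} := ha
  set X := M * ((m:ℝ) + 2) ^ m / t ^ m with hXdef
  have hX0 : 0 ≤ X := by
    rw [hXdef]; positivity
  have hs_eq : t - 2 * g = t * (m:ℝ) / ((m:ℝ) + 2) := by
    rw [hgdef]; field_simp; ring
  have hsIoo : t - 2*g ∈ Set.Ioo (0:ℝ) r := by
    constructor
    · rw [hs_eq]; positivity
    · linarith
  have hXeq : M * (m:ℝ)^m / (t - 2*g)^m = X := by
    rw [hs_eq, hXdef, div_pow, mul_pow]
    rw [div_div_eq_mul_div]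
    rw [mul_comm (M * (m:ℝ)^m) (((m:ℝ)+2)^m)]
    field_simp
  have hbS : ∀ w : EE, nn w < r - t + 2*g → ‖a w‖ ≤ X := by
    intro w hw
    have h1 := hB (t - 2*g) hsIoo w (by rw [hΩ]; show nn w < r - (t - 2*g); linarith)
    rwa [hXeq] at h1
  have hsub0 : {x : EE | nn x < r - t + 2*g} ⊆ {x : EE | nn x < r - 0} := fun x hx => by
    simp only [mem_setOf_eq] at *; linarith
  have haS : DifferentiableOn ℂ a {x : EE | nn x < r - t + 2*g} := ha0.mono hsub0
  have hgap : r - t + 2*g - (r - t + g) = g := by ring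
  have hgap2 : r - t + g - (r - t) = g := by ring
  have h1bound : ∀ v : EE, ∀ w : EE, nn w < r - t + g →
      ‖fderiv ℂ a w v‖ ≤ 3 * X * nn v / g := by
    intro v w hw
    have h := keyA (show r - t + g < r - t + 2*g by linarith) hX0 a haS hbS v w hw
    rwa [hgap] at h
  have h0z : ‖a z‖ ≤ X := hbS z (by linarith)
  have h1z : ∀ i, ‖fderiv ℂ a z (e i)‖ ≤ 3 * X * nn (e i) / g := by
    intro i
    have h := keyA (show r - t < r - t + g by linarith) hX0 a
      (haS.mono fun x hx => by simp only [mem_setOf_eq] at *; linarith)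
      (fun w hw => hbS w (by linarith)) (e i) z hz'
    rwa [hgap2] at h
  have hbdiff : ∀ j, DifferentiableOn ℂ (fun w => fderiv ℂ a w (d j))
      {x : EE | nn x < r - t + g} := fun j =>
    lemD (show r - t + g < r - t + 2*g by linarith) (by linarith) a haS hbS (d j)
  have h2z : ∀ j, ‖fderiv ℂ (fun w => fderiv ℂ a w (d j)) z (d' j)‖ ≤
      3 * (3 * X * nn (d j) / g) * nn (d' j) / g := by
    intro j
    have hX1 : 0 ≤ 3 * X * nn (d j) / g := by
      have := nn_nonneg (d j); positivity
    have h := keyA (show r - t < r - t + g by linarith) hX1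
      (fun w => fderiv ℂ a w (d j)) (hbdiff j)
      (fun w hw => h1bound (d j) w hw) (d' j) z hz'
    rwa [hgap2] at h
  have hzU : z ∈ U := hUΩ (subset_closure (by
    rw [hΩ 0]; show nn z < r - 0; linarith))
  obtain ⟨hc0K, hcK⟩ := hK z hzU
  -- triangle inequality
  have t0 : ‖c₀ z * a z‖ ≤ K * X := by
    rw [norm_mul]
    exact mul_le_mul hc0K h0z (norm_nonneg _) hK0
  have t1 : ‖∑ i, c₁ i z * fderiv ℂ a z (e i)‖ ≤ S1 * (X / g) := by
    calc ‖∑ i, c₁ i z * fderiv ℂ a z (e i)‖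
        ≤ ∑ i, ‖c₁ i z * fderiv ℂ a z (e i)‖ := norm_sum_le _ _
      _ ≤ ∑ i, 3 * K * nn (e i) * (X / g) := by
          apply Finset.sum_le_sum
          intro i _
          rw [norm_mul]
          calc ‖c₁ i z‖ * ‖fderiv ℂ a z (e i)‖
              ≤ K * (3 * X * nn (e i) / g) :=
                mul_le_mul (hcK i).1 (h1z i) (norm_nonneg _) hK0
            _ = 3 * K * nn (e i) * (X / g) := by ring
      _ = S1 * (X / g) := by rw [hS1def, Finset.sum_mul]
  have t2 : ‖∑ j, c₂ j z * fderiv ℂ (fun w => fderiv ℂ a w (d j)) z (d' j)‖ ≤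
      S2 * (X / g^2) := by
    calc ‖∑ j, c₂ j z * fderiv ℂ (fun w => fderiv ℂ a w (d j)) z (d' j)‖
        ≤ ∑ j, ‖c₂ j z * fderiv ℂ (fun w => fderiv ℂ a w (d j)) z (d' j)‖ :=
          norm_sum_le _ _
      _ ≤ ∑ j, 9 * K * nn (d j) * nn (d' j) * (X / g^2) := by
          apply Finset.sum_le_sum
          intro j _
          rw [norm_mul]
          calc ‖c₂ j z‖ *
                ‖fderiv ℂ (fun w => fderiv ℂ a w (d j)) z (d' j)‖
              ≤ K * (3 * (3 * X * nn (d j) / g) * nn (d' j) / g) :=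
                mul_le_mul (hcK j).2 (h2z j) (norm_nonneg _) hK0
            _ = 9 * K * nn (d j) * nn (d' j) * (X / g^2) := by
                field_simp
                ring
      _ = S2 * (X / g^2) := by rw [hS2def, Finset.sum_mul]
  have tri : ‖c₀ z * a z + ∑ i, c₁ i z * fderiv ℂ a z (e i)
      + ∑ j, c₂ j z * fderiv ℂ (fun w => fderiv ℂ a w (d j)) z (d' j)‖ ≤
      K * X + S1 * (X / g) + S2 * (X / g^2) := by
    calc ‖c₀ z * a z + ∑ i, c₁ i z * fderiv ℂ a z (e i)
        + ∑ j, c₂ j z * fderiv ℂ (fun w => fderiv ℂ a w (d j)) z (d' j)‖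
        ≤ ‖c₀ z * a z + ∑ i, c₁ i z * fderiv ℂ a z (e i)‖
          + ‖∑ j, c₂ j z * fderiv ℂ (fun w => fderiv ℂ a w (d j)) z (d' j)‖ :=
          norm_add_le _ _
      _ ≤ ‖c₀ z * a z‖ + ‖∑ i, c₁ i z * fderiv ℂ a z (e i)‖
          + ‖∑ j, c₂ j z * fderiv ℂ (fun w => fderiv ℂ a w (d j)) z (d' j)‖ := by
          have := norm_add_le (c₀ z * a z) (∑ i, c₁ i z * fderiv ℂ a z (e i))
          linarith
      _ ≤ K * X + S1 * (X / g) + S2 * (X / g^2) := by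
          have := t0; have := t1; have := t2; linarith
  -- final arithmetic
  set Y := M * ((m:ℝ) + 2) ^ (m + 2) / t ^ (m + 2) with hYdef
  have hY0 : 0 ≤ Y := by rw [hYdef]; positivity
  have hYX : X / g ^ 2 = Y := by
    rw [hXdef, hgdef, hYdef, pow_add, pow_add]
    field_simp
  have hXg : X / g = Y * g := by
    rw [← hYX]; field_simp
  have hX_eq : X = Y * g ^ 2 := by
    rw [← hYX]; field_simp
  have hgr : g ≤ r / 3 := by linarith
  have hfin : K * X + S1 * (X / g) + S2 * (X / g^2) ≤
      (K * (r/3)^2 + S1 * (r/3) + S2 + 1) * M * ((m:ℝ) + 2) ^ (m + 2) / t ^ (m + 2) := by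
    rw [hYX, hXg, hX_eq]
    rw [show (K * (r/3)^2 + S1 * (r/3) + S2 + 1) * M * ((m:ℝ) + 2) ^ (m + 2) / t ^ (m + 2)
        = (K * (r/3)^2 + S1 * (r/3) + S2 + 1) * Y from by rw [hYdef]; ring]
    nlinarith [mul_le_mul_of_nonneg_left (pow_le_pow_left₀ hg.le hgr 2)
        (mul_nonneg hK0 hY0),
      mul_le_mul_of_nonneg_left hgr (mul_nonneg hS1 hY0),
      mul_nonneg hS2 hY0, hY0]
  exact le_trans tri hfin
end
end

section
/- Under the hypotheses of the previous propagation step, define $\Psi_\eta(x_2) = \inf_{|y_1| < \eta\varepsilon_1} \Phi(y_1, x_2)$. Then for every $\varepsilon > 0$ there is $C_\varepsilon$ such that $|u_h(x_1, x_2)| \le C_\varepsilon e^{(\Psi_\eta(x_2) + \varepsilon)/h}$ for all $|x_1| < \eta\varepsilon_1$, $|x_2| < \eta\varepsilon_1$ and $h \in (0, h_0]$. -/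
open Complex Metric

/-- Improved bound: `|u_h(x₁,x₂)| ≤ C_ε e^{(Ψ_η(x₂)+ε)/h}` where
`Ψ_η(x₂) = inf_{|y₁| < ηε₁} Φ(y₁,x₂)`. -/
theorem stmt_12 (V : Set (ℂ × ℂ)) (hV : IsOpen V) (h0V : (0, 0) ∈ V)
    (Φ : ℂ × ℂ → ℝ) (hΦc : ContinuousOn Φ V) (hΦ0 : Φ (0, 0) = 0)
    (h₀ : ℝ) (hh₀ : 0 < h₀) (u : ℝ → ℂ × ℂ → ℂ)
    (ε₁ δ₃ : ℝ) (hε₁ : 0 < ε₁) (hδ₃ : 0 < δ₃)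
    (hpoly : {x : ℂ × ℂ | ‖x.1‖ < ε₁ ∧ ‖x.2‖ < ε₁} ⊆ V)
    (hi : ∀ ε > 0, ∃ Cε : ℝ, ∀ h ∈ Set.Ioc (0:ℝ) h₀, ∀ x ∈ V,
      ‖u h x‖ ≤ Cε * Real.exp ((Φ x + ε) / h))
    (hhol : ∀ h ∈ Set.Ioc (0:ℝ) h₀, ∀ x₂ : ℂ, ‖x₂‖ < ε₁ →
      DifferentiableOn ℂ (fun w => u h (w, x₂)) (ball (0:ℂ) ε₁))
    (C : ℝ)
    (hii : ∀ h ∈ Set.Ioc (0:ℝ) h₀, ∀ x₁ x₂ : ℂ, ‖x₁‖ < ε₁ → ‖x₂‖ < ε₁ →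
      ‖h * deriv (fun w => u h (w, x₂)) x₁‖ ≤
        C * Real.exp ((Φ (x₁, x₂) - δ₃) / h))
    (η : ℝ) (hη0 : 0 < η) (hη1 : η ≤ 1)
    (hΦsmall : ∀ x : ℂ × ℂ, ‖x.1‖ < η * ε₁ → ‖x.2‖ < η * ε₁ →
      |Φ x| < δ₃ / 4)
    (Ψ : ℂ → ℝ)
    (hΨ : ∀ x₂ : ℂ, Ψ x₂ = sInf {w : ℝ | ∃ y₁ : ℂ, ‖y₁‖ < η * ε₁ ∧ w = Φ (y₁, x₂)}) :
    ∀ ε > 0, ∃ Cε : ℝ, ∀ h ∈ Set.Ioc (0:ℝ) h₀, ∀ x₁ x₂ : ℂ,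
      ‖x₁‖ < η * ε₁ → ‖x₂‖ < η * ε₁ →
      ‖u h (x₁, x₂)‖ ≤ Cε * Real.exp ((Ψ x₂ + ε) / h) := by
  intro ε hε
  have hηε : 0 < η * ε₁ := mul_pos hη0 hε₁
  have hηε₁ : η * ε₁ ≤ ε₁ := by nlinarith
  -- C is nonnegative
  have hC0 : 0 ≤ C := by
    have h1 := hii h₀ ⟨hh₀, le_refl _⟩ 0 0 (by simpa using hε₁) (by simpa using hε₁)
    have h2 : (0:ℝ) ≤ ‖(h₀:ℂ) * deriv (fun w => u h₀ (w, 0)) 0‖ :=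
      norm_nonneg _
    nlinarith [Real.exp_pos ((Φ (0, 0) - δ₃) / h₀), le_trans h2 h1]
  obtain ⟨Cε, hCε⟩ := hi (ε / 2) (half_pos hε)
  have hCε0 : 0 ≤ Cε := by
    have h1 := hCε h₀ ⟨hh₀, le_refl _⟩ (0, 0) h0V
    have h2 : (0:ℝ) ≤ ‖u h₀ (0, 0)‖ := norm_nonneg _
    nlinarith [Real.exp_pos ((Φ (0, 0) + ε / 2) / h₀), le_trans h2 h1]
  refine ⟨Cε + 8 * ε₁ * C / δ₃, ?_⟩
  intro h hh x₁ x₂ hx₁ hx₂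
  have hhpos : 0 < h := hh.1
  -- the infimum set
  set S : Set ℝ := {w : ℝ | ∃ y₁ : ℂ, ‖y₁‖ < η * ε₁ ∧ w = Φ (y₁, x₂)} with hS
  have hSne : S.Nonempty := ⟨Φ (0, x₂), 0, by simpa using hηε, rfl⟩
  have hSlb : ∀ w ∈ S, -(δ₃ / 4) ≤ w := by
    rintro w ⟨y₁, hy₁, rfl⟩
    have := hΦsmall (y₁, x₂) hy₁ hx₂
    linarith [abs_lt.mp this]
  have hΨlb : -(δ₃ / 4) ≤ Ψ x₂ := (hΨ x₂) ▸ le_csInf hSne hSlb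
  -- pick y₁ nearly attaining the infimum
  obtain ⟨w, hwS, hwlt⟩ := Real.lt_sInf_add_pos hSne (half_pos hε)
  obtain ⟨y₁, hy₁, rfl⟩ := hwS
  rw [← hΨ x₂] at hwlt
  -- value at y₁
  have hx₂' : ‖x₂‖ < ε₁ := lt_of_lt_of_le hx₂ hηε₁
  have hy₁' : ‖y₁‖ < ε₁ := lt_of_lt_of_le hy₁ hηε₁
  have hx₁' : ‖x₁‖ < ε₁ := lt_of_lt_of_le hx₁ hηε₁
  have hval : ‖u h (y₁, x₂)‖ ≤ Cε * Real.exp ((Ψ x₂ + ε) / h) := by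
    refine le_trans (hCε h hh (y₁, x₂) (hpoly ⟨hy₁', hx₂'⟩)) ?_
    have : (Φ (y₁, x₂) + ε / 2) / h ≤ (Ψ x₂ + ε) / h :=
      (div_le_div_iff_of_pos_right hhpos).mpr (by linarith)
    exact mul_le_mul_of_nonneg_left (Real.exp_le_exp.mpr this) hCε0
  -- the derivative bound on the small ball
  set f : ℂ → ℂ := fun w => u h (w, x₂) with hf
  set M : ℝ := C / h * Real.exp ((δ₃ / 4 - δ₃) / h) with hM
  have hMbound : ∀ w ∈ ball (0:ℂ) (η * ε₁), ‖fderiv ℂ f w‖ ≤ M := by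
    intro w hw
    rw [mem_ball_zero_iff] at hw
    have hw' : ‖w‖ < ε₁ := lt_of_lt_of_le hw hηε₁
    have h1 := hii h hh w x₂ hw' hx₂'
    have h2 : ‖(h:ℂ) * deriv f w‖ = h * ‖deriv f w‖ := by
      rw [norm_mul]
      simp [abs_of_pos hhpos]
    have h3 : Φ (w, x₂) ≤ δ₃ / 4 := le_of_lt (abs_lt.mp (hΦsmall (w, x₂) hw hx₂)).2
    have h4 : Real.exp ((Φ (w, x₂) - δ₃) / h) ≤ Real.exp ((δ₃ / 4 - δ₃) / h) := by
      exact Real.exp_le_exp.mpr ((div_le_div_iff_of_pos_right hhpos).mpr (by linarith))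
    have h5 : h * ‖deriv f w‖ ≤ C * Real.exp ((δ₃ / 4 - δ₃) / h) := by
      rw [← h2]
      exact h1.trans (mul_le_mul_of_nonneg_left h4 hC0)
    rw [← norm_deriv_eq_norm_fderiv]
    rw [hM, div_mul_eq_mul_div, le_div_iff₀ hhpos]
    calc ‖deriv f w‖ * h = h * ‖deriv f w‖ := by
          ring
      _ ≤ C * Real.exp ((δ₃ / 4 - δ₃) / h) := h5
  have hdiffAt : ∀ w ∈ ball (0:ℂ) (η * ε₁), DifferentiableAt ℂ f w := by
    intro w hw
    rw [mem_ball_zero_iff] at hw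
    have := hhol h hh x₂ hx₂'
    refine this.differentiableAt (isOpen_ball.mem_nhds ?_)
    rw [mem_ball_zero_iff]
    exact lt_of_lt_of_le hw hηε₁
  have hmvt : ‖f x₁ - f y₁‖ ≤ M * ‖x₁ - y₁‖ :=
    (convex_ball (0:ℂ) (η * ε₁)).norm_image_sub_le_of_norm_fderiv_le hdiffAt hMbound
      (by rw [mem_ball_zero_iff]; exact hy₁)
      (by rw [mem_ball_zero_iff]; exact hx₁)
  have hMpos : 0 ≤ M := by positivity
  have hdist : ‖x₁ - y₁‖ ≤ 2 * ε₁ := by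
    calc ‖x₁ - y₁‖ ≤ ‖x₁‖ + ‖y₁‖ := norm_sub_le _ _
      _ ≤ 2 * ε₁ := by
          linarith
  -- bound the MVT term
  have hkey : M * (2 * ε₁) ≤ 8 * ε₁ * C / δ₃ * Real.exp ((Ψ x₂ + ε) / h) := by
    have hsplit : (δ₃ / 4 - δ₃) / h = -(δ₃ / 4) / h + -(δ₃ / 2) / h := by
      field_simp; ring
    have e1 : Real.exp (-(δ₃ / 4) / h) / h ≤ 4 / δ₃ := by
      have hx : δ₃ / (4 * h) ≤ Real.exp (δ₃ / (4 * h)) := by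
        have := Real.add_one_le_exp (δ₃ / (4 * h)); linarith
      have h6 : Real.exp (-(δ₃ / 4) / h) = (Real.exp (δ₃ / (4 * h)))⁻¹ := by
        rw [← Real.exp_neg]; congr 1; field_simp
      rw [h6, div_le_div_iff₀ hhpos hδ₃, inv_mul_le_iff₀ (Real.exp_pos _)]
      rw [div_le_iff₀ (by positivity : (0:ℝ) < 4 * h)] at hx
      nlinarith [Real.exp_pos (δ₃ / (4 * h))]
    have e2 : Real.exp (-(δ₃ / 2) / h) ≤ Real.exp ((Ψ x₂ + ε) / h) := by
      exact Real.exp_le_exp.mpr ((div_le_div_iff_of_pos_right hhpos).mpr (by linarith))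
    rw [hM, hsplit, Real.exp_add]
    have expand : C / h * (Real.exp (-(δ₃ / 4) / h) * Real.exp (-(δ₃ / 2) / h)) * (2 * ε₁)
        = 2 * ε₁ * C * (Real.exp (-(δ₃ / 4) / h) / h) * Real.exp (-(δ₃ / 2) / h) := by
      ring
    rw [expand]
    calc 2 * ε₁ * C * (Real.exp (-(δ₃ / 4) / h) / h) * Real.exp (-(δ₃ / 2) / h)
        ≤ 2 * ε₁ * C * (4 / δ₃) * Real.exp ((Ψ x₂ + ε) / h) := by
          apply mul_le_mul ?_ e2 (le_of_lt (Real.exp_pos _)) (by positivity)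
          exact mul_le_mul_of_nonneg_left e1 (by positivity)
      _ = 8 * ε₁ * C / δ₃ * Real.exp ((Ψ x₂ + ε) / h) := by
          field_simp; ring
  -- combine
  have htri : ‖u h (x₁, x₂)‖ ≤ ‖u h (y₁, x₂)‖ + ‖f x₁ - f y₁‖ := by
    have : u h (x₁, x₂) = u h (y₁, x₂) + (f x₁ - f y₁) := by simp [hf]
    rw [this]
    calc ‖u h (y₁, x₂) + (f x₁ - f y₁)‖
        ≤ ‖u h (y₁, x₂)‖ + ‖f x₁ - f y₁‖ := by
          exact norm_add_le _ _
      _ = ‖u h (y₁, x₂)‖ + ‖f x₁ - f y₁‖ := by rfl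
  calc ‖u h (x₁, x₂)‖
      ≤ ‖u h (y₁, x₂)‖ + ‖f x₁ - f y₁‖ := htri
    _ ≤ Cε * Real.exp ((Ψ x₂ + ε) / h) + M * (2 * ε₁) := by
        refine add_le_add hval (hmvt.trans ?_)
        exact mul_le_mul_of_nonneg_left hdist hMpos
    _ ≤ Cε * Real.exp ((Ψ x₂ + ε) / h) + 8 * ε₁ * C / δ₃ * Real.exp ((Ψ x₂ + ε) / h) :=
        by linarith [hkey]
    _ = (Cε + 8 * ε₁ * C / δ₃) * Real.exp ((Ψ x₂ + ε) / h) := by ring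
end
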